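/- Let (X,T) be a topological dynamical system and μ ∈ M(X,T). If the measure preserving system (X,B,μ,T) is rigid (there is a strictly increasing sequence (n_i) with f∘T^{n_i} → f in L² for all f ∈ L²(μ)), then there exists a strictly increasing sequence A ⊆ ℕ such that (X,T) is μ-A-equicontinuous. -/

import Mathlib

set_option maxHeartbeats 800000

open MeasureTheory Filter Topology

theorem stmt10 {X : Type*} [MetricSpace X] [CompactSpace X] [MeasurableSpace X]
    [BorelSpace X] (μ : Measure X) [IsProbabilityMeasure μ] (T : X ≃ₜ X)
    (hT : MeasurePreserving T μ μ)
    (hrigid : ∃ t : ℕ → ℕ, StrictMono t ∧ ∀ f : X → ℝ, MemLp f 2 μ →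
      Tendsto (fun k => eLpNorm (fun x => f ((⇑T)^[t k] x) - f x) 2 μ)
        atTop (𝓝 0)) :
    ∃ a : ℕ → ℕ, StrictMono a ∧
      ∀ τ > (0 : ℝ), ∃ K : Set X, IsCompact K ∧
        μ K > ENNReal.ofReal (1 - τ) ∧ ∀ ε > (0 : ℝ), ∃ δ > (0 : ℝ),
        ∀ x ∈ K, ∀ y ∈ K, dist x y < δ →
          ∀ n : ℕ, dist ((⇑T)^[a n] x) ((⇑T)^[a n] y) < ε := by
  obtain ⟨t, ht_mono, ht⟩ := hrigid
  have hcont : ∀ n : ℕ, Continuous fun x : X => (⇑T)^[n] x := fun n =>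
    T.continuous.iterate n
  -- each function dist · c is in L²
  have hm : ∀ c : X, MemLp (fun x => dist x c) 2 μ := by
    intro c
    refine MemLp.of_bound (continuous_id.dist continuous_const).aestronglyMeasurable
      (Metric.diam (Set.univ : Set X)) (Eventually.of_forall fun x => ?_)
    rw [Real.norm_eq_abs, abs_of_nonneg dist_nonneg]
    exact Metric.dist_le_diam_of_mem isCompact_univ.isBounded trivial trivial
  -- convergence in measure of x ↦ dist ((T^[t n]) x) c to dist x c
  have hconv : ∀ c : X, TendstoInMeasure μ
      (fun n x => dist ((⇑T)^[t n] x) c) atTop (fun x => dist x c) := by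
    intro c
    refine tendstoInMeasure_of_tendsto_eLpNorm (p := 2) (by norm_num)
      (fun n => ((hcont (t n)).dist continuous_const).aestronglyMeasurable)
      (continuous_id.dist continuous_const).aestronglyMeasurable ?_
    have h2 := ht (fun x => dist x c) (hm c)
    simpa only [Pi.sub_def] using h2
  -- convergence in measure of x ↦ dist ((T^[t n]) x) x to 0
  have hF : TendstoInMeasure μ (fun n x => dist ((⇑T)^[t n] x) x) atTop
      (fun _ => 0) := by
    rw [tendstoInMeasure_iff_dist]
    intro ε hε
    obtain ⟨s, -, hsfin, hscov⟩ :=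
      finite_cover_balls_of_compact (isCompact_univ : IsCompact (Set.univ : Set X))
        (show (0 : ℝ) < ε / 3 by positivity)
    have key : ∀ n : ℕ, μ {x | ε ≤ dist (dist ((⇑T)^[t n] x) x) 0} ≤
        ∑ c ∈ hsfin.toFinset,
          μ {x | ε / 3 ≤ dist (dist ((⇑T)^[t n] x) c) (dist x c)} := by
      intro n
      refine le_trans (measure_mono ?_) (measure_biUnion_finset_le _ _)
      intro x hx
      simp only [Set.mem_setOf_eq, Real.dist_eq, sub_zero] at hx
      have hx' : ε ≤ dist ((⇑T)^[t n] x) x := by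
        rwa [abs_of_nonneg dist_nonneg] at hx
      obtain ⟨c, hc, hxc⟩ := Set.mem_iUnion₂.1 (hscov (Set.mem_univ x))
      rw [Metric.mem_ball] at hxc
      refine Set.mem_biUnion (hsfin.mem_toFinset.2 hc) ?_
      simp only [Set.mem_setOf_eq, Real.dist_eq]
      have h1 : dist ((⇑T)^[t n] x) x ≤ dist ((⇑T)^[t n] x) c + dist c x :=
        dist_triangle _ _ _
      have h2 : dist c x = dist x c := dist_comm _ _
      have : ε / 3 ≤ dist ((⇑T)^[t n] x) c - dist x c := by linarith
      exact this.trans (le_abs_self _)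
    have hsum : Tendsto (fun n => ∑ c ∈ hsfin.toFinset,
        μ {x | ε / 3 ≤ dist (dist ((⇑T)^[t n] x) c) (dist x c)}) atTop (𝓝 0) := by
      have := tendsto_finset_sum hsfin.toFinset
        (fun c _ => tendstoInMeasure_iff_dist.1 (hconv c) (ε / 3) (by positivity))
      simpa using this
    exact tendsto_of_tendsto_of_tendsto_of_le_of_le tendsto_const_nhds hsum
      (fun n => zero_le) key
  -- extract an a.e. convergent subsequence
  obtain ⟨ns, hns_mono, hae⟩ := hF.exists_seq_tendsto_ae
  refine ⟨fun k => t (ns k), ht_mono.comp hns_mono, ?_⟩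
  intro τ hτ
  set ε0 : ℝ := min (τ / 2) (1 / 2) with hε0def
  have hε0pos : 0 < ε0 := lt_min (by positivity) (by norm_num)
  have hε0le : ε0 ≤ 1 / 2 := min_le_right _ _
  have hε0ltτ : ε0 < τ := lt_of_le_of_lt (min_le_left _ _) (by linarith)
  -- Egorov
  obtain ⟨E, hEm, hEμ, hEu⟩ := tendstoUniformlyOn_of_ae_tendsto'
    (f := fun k x => dist ((⇑T)^[t (ns k)] x) x) (g := fun _ => 0) (μ := μ)
    (fun k => ((hcont (t (ns k))).dist continuous_id).stronglyMeasurable)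
    stronglyMeasurable_const hae hε0pos
  -- the complement of E has large measure
  have hcompl : μ Eᶜ = 1 - μ E := by
    rw [measure_compl hEm (measure_ne_top μ E), measure_univ]
  have hlt : ENNReal.ofReal (1 - τ) < μ Eᶜ := by
    rw [hcompl]
    calc ENNReal.ofReal (1 - τ) < ENNReal.ofReal (1 - ε0) := by
          rw [ENNReal.ofReal_lt_ofReal_iff (by linarith)]; linarith
      _ ≤ 1 - ENNReal.ofReal ε0 := by
          rw [ENNReal.ofReal_sub _ hε0pos.le, ENNReal.ofReal_one]
      _ ≤ 1 - μ E := tsub_le_tsub_left hEμ 1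
  obtain ⟨K, hKE, hKc, hKμ⟩ := hEm.compl.exists_lt_isCompact hlt
  refine ⟨K, hKc, hKμ, ?_⟩
  intro ε hε
  -- uniform convergence gives a tail bound
  have hEu' := Metric.tendstoUniformlyOn_iff.1 hEu (ε / 4) (by positivity)
  obtain ⟨M, hM⟩ := eventually_atTop.1 hEu'
  -- finitely many iterates are uniformly continuous
  have hfin : ∀ m : ℕ, ∃ δ > (0 : ℝ), ∀ i < m, ∀ x y : X, dist x y < δ →
      dist ((⇑T)^[t (ns i)] x) ((⇑T)^[t (ns i)] y) < ε := by
    intro m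
    induction m with
    | zero => exact ⟨1, one_pos, fun i hi => absurd hi (Nat.not_lt_zero i)⟩
    | succ m ih =>
      obtain ⟨δ1, hδ1, h1⟩ := ih
      have huc : UniformContinuous fun x : X => (⇑T)^[t (ns m)] x :=
        CompactSpace.uniformContinuous_of_continuous (hcont _)
      obtain ⟨δ2, hδ2, h2⟩ := Metric.uniformContinuous_iff.1 huc ε hε
      refine ⟨min δ1 δ2, lt_min hδ1 hδ2, fun i hi x y hxy => ?_⟩
      rcases Nat.lt_succ_iff_lt_or_eq.1 hi with h | h
      · exact h1 i h x y (hxy.trans_le (min_le_left _ _))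
      · subst h; exact h2 (hxy.trans_le (min_le_right _ _))
  obtain ⟨δ0, hδ0, hδ0h⟩ := hfin M
  refine ⟨min δ0 (ε / 2), lt_min hδ0 (by positivity), ?_⟩
  intro x hx y hy hxy n
  rcases lt_or_ge n M with h | h
  · exact hδ0h n h x y (hxy.trans_le (min_le_left _ _))
  · have h1 : dist ((⇑T)^[t (ns n)] x) x < ε / 4 := by
      have := hM n h x (hKE hx)
      rwa [Real.dist_eq, zero_sub, abs_neg, abs_of_nonneg dist_nonneg] at this
    have h2 : dist ((⇑T)^[t (ns n)] y) y < ε / 4 := by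
      have := hM n h y (hKE hy)
      rwa [Real.dist_eq, zero_sub, abs_neg, abs_of_nonneg dist_nonneg] at this
    have htri : dist ((⇑T)^[t (ns n)] x) ((⇑T)^[t (ns n)] y) ≤
        dist ((⇑T)^[t (ns n)] x) x + dist x y + dist y ((⇑T)^[t (ns n)] y) :=
      dist_triangle4 _ _ _ _
    have hxy' : dist x y < ε / 2 := hxy.trans_le (min_le_right _ _)
    have h2' : dist y ((⇑T)^[t (ns n)] y) < ε / 4 := by rwa [dist_comm]
    calc dist ((⇑T)^[t (ns n)] x) ((⇑T)^[t (ns n)] y) ≤ _ := htri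
      _ < ε / 4 + ε / 2 + ε / 4 := by linarith
      _ = ε := by ring
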